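/- Discrete L^q stability (iterated): in the discrete upwind setting with N time steps, let q ∈ (1,∞) and κ > 1. Suppose ρ⁰_K ≥ 0 and fⁿ_K ≥ 0 for all K and n, and for each n ∈ {0,…,N−1} let ρⁿ⁺¹ solve one step of the implicit upwind scheme with data ρⁿ, fⁿ, fluxes uⁿ and time step δ > 0. Set λⁿ := δ · max_{K∈𝒯} ((div uⁿ)_K)⁻ and Λ := exp(Σ_{n=0}^{N−1} λⁿ). If ((q−1)/q) λⁿ ≤ (κ−1)/κ for every n, then max_{0 ≤ n ≤ N} ‖ρⁿ‖_{ℓ^q} ≤ Λ^{κ(1−1/q)} ( ‖ρ⁰‖_{ℓ^q} + Σ_{n=0}^{N−1} δ ‖fⁿ‖_{ℓ^q} ). -/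

import Mathlib

open Finset

lemma sum_erase_eq_sum_ite {ι : Type*} [Fintype ι] [DecidableEq ι]
    (K : ι) (F : ι → ℝ) :
    ∑ L ∈ univ.erase K, F L = ∑ L, if L = K then 0 else F L := by
  rw [← Finset.sum_erase (univ : Finset ι) (by simp : (if K = K then (0:ℝ) else F K) = 0)]
  exact Finset.sum_congr rfl fun L hL => by rw [if_neg (Finset.mem_erase.1 hL).1]

lemma sum_erase_swap {ι : Type*} [Fintype ι] [DecidableEq ι] (F : ι → ι → ℝ) :
    ∑ K, ∑ L ∈ univ.erase K, F K L = ∑ K, ∑ L ∈ univ.erase K, F L K := by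
  have h1 : ∀ (G : ι → ι → ℝ), ∑ K, ∑ L ∈ univ.erase K, G K L
      = ∑ K, ∑ L, if L = K then 0 else G K L := fun G =>
    Finset.sum_congr rfl fun K _ => sum_erase_eq_sum_ite K _
  rw [h1, h1, Finset.sum_comm]
  refine Finset.sum_congr rfl fun K _ => Finset.sum_congr rfl fun L _ => ?_
  by_cases h : L = K
  · simp [h]
  · rw [if_neg h, if_neg (Ne.symm h)]

lemma one_le_one_sub_mul_exp {κ t : ℝ} (hκ : 1 < κ) (ht : 0 ≤ t) (h : t ≤ (κ-1)/κ) :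
    1 ≤ (1 - t) * Real.exp (κ * t) := by
  have hκ0 : (0:ℝ) < κ := by linarith
  have h1 : κ * t ≤ κ - 1 := by
    calc κ * t = t * κ := mul_comm _ _
    _ ≤ (κ-1)/κ * κ := mul_le_mul_of_nonneg_right h hκ0.le
    _ = κ - 1 := by field_simp
  have ht1 : 1 - t > 0 := by
    have : (κ-1)/κ < 1 := by rw [div_lt_one hκ0]; linarith
    linarith
  have hexp : 1 + κ * t ≤ Real.exp (κ * t) := by
    have := Real.add_one_le_exp (κ * t); linarith
  calc (1:ℝ) ≤ (1 - t) * (1 + κ * t) := by nlinarith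
  _ ≤ (1 - t) * Real.exp (κ * t) := mul_le_mul_of_nonneg_left hexp ht1.le

lemma aux_step {ι : Type*} [Fintype ι] [DecidableEq ι]
    (vol : ι → ℝ) (hvol : ∀ K, 0 < vol K)
    (P : ι → ι → ℝ) (hP : ∀ K L, 0 ≤ P K L)
    (q κ lam δ : ℝ) (hq : 1 < q) (hκ : 1 < κ) (hδ : 0 < δ)
    (hlam0 : 0 ≤ lam) (hCFL : (1 - 1/q) * lam ≤ (κ-1)/κ)
    (x y g : ι → ℝ) (hx : ∀ K, 0 ≤ x K) (hy : ∀ K, 0 ≤ y K) (hg : ∀ K, 0 ≤ g K)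
    (heq : ∀ K, vol K * x K + (∑ L ∈ univ.erase K, P K L) * x K
        - ∑ L ∈ univ.erase K, P L K * x L = vol K * (y K + δ * g K))
    (hdiv : ∀ K, (∑ L ∈ univ.erase K, P L K) - (∑ L ∈ univ.erase K, P K L) ≤ lam * vol K) :
    (∑ K, vol K * x K ^ q) ^ (1/q) ≤
      Real.exp (κ * ((1 - 1/q) * lam)) *
        ((∑ K, vol K * y K ^ q) ^ (1/q) + δ * (∑ K, vol K * g K ^ q) ^ (1/q)) := by
  have hq0 : (0:ℝ) < q := by linarith
  have hq0' : q ≠ 0 := hq0.ne'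
  have hqm1 : (0:ℝ) < q - 1 := by linarith
  set p : ℝ := q / (q - 1) with hp
  have hpq : p.HolderConjugate q := (Real.HolderConjugate.conjExponent hq).symm
  have hp1 : 1/p = 1 - 1/q := by rw [hp, one_div_div]; field_simp
  have hc : 0 ≤ 1 - 1/q := by
    have : 1/q < 1 := by rw [div_lt_one hq0]; exact hq
    linarith
  set S : ℝ := ∑ K, vol K * x K ^ q with hSdef
  set Y : ℝ := ∑ K, vol K * y K ^ q with hYdef
  set G : ℝ := ∑ K, vol K * g K ^ q with hGdef
  have hS0 : 0 ≤ S := Finset.sum_nonneg fun K _ =>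
    mul_nonneg (hvol K).le (Real.rpow_nonneg (hx K) q)
  have hpow : ∀ K, x K * x K ^ (q-1) = x K ^ q := by
    intro K
    rcases eq_or_lt_of_le (hx K) with h | h
    · rw [← h, Real.zero_rpow hq0', Real.zero_rpow (by linarith : q - 1 ≠ 0), mul_zero]
    · nth_rewrite 1 [← Real.rpow_one (x K)]
      rw [← Real.rpow_add h]
      norm_num
  -- names for the flux sums
  set T1 : ℝ := ∑ K, (∑ L ∈ univ.erase K, P K L) * x K ^ q with hT1def
  set Tin : ℝ := ∑ K, (∑ L ∈ univ.erase K, P L K) * x K ^ q with hTindef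
  set T2 : ℝ := ∑ K, (∑ L ∈ univ.erase K, P L K * x L) * x K ^ (q-1) with hT2def
  set R : ℝ := ∑ K, vol K * (y K + δ * g K) * x K ^ (q-1) with hRdef
  -- tested identity
  have hident : S + T1 - T2 = R := by
    rw [hSdef, hT1def, hT2def, hRdef, ← Finset.sum_add_distrib, ← Finset.sum_sub_distrib]
    refine Finset.sum_congr rfl fun K _ => ?_
    rw [← heq K, ← hpow K]
    ring
  -- Young bound on T2
  have hyoung : ∀ K L : ι, x L * x K ^ (q-1) ≤ (1 - 1/q) * x K ^ q + (1/q) * x L ^ q := by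
    intro K L
    have h := Real.young_inequality_of_nonneg (Real.rpow_nonneg (hx K) (q-1)) (hx L) hpq
    have h2 : (x K ^ (q-1)) ^ p = x K ^ q := by
      rw [← Real.rpow_mul (hx K)]
      congr 1
      rw [hp]; field_simp
    rw [h2] at h
    have h3 : x K ^ q / p = (1 - 1/q) * x K ^ q := by
      rw [div_eq_mul_one_div, hp1]; ring
    have h4 : x L ^ q / q = (1/q) * x L ^ q := by ring
    rw [h3, h4] at h
    linarith [h]
  have hT2le : T2 ≤ (1 - 1/q) * Tin + (1/q) * T1 := by
    have step1 : T2 ≤ ∑ K, ∑ L ∈ univ.erase K, P L K * ((1 - 1/q) * x K ^ q + (1/q) * x L ^ q) := by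
      rw [hT2def]
      apply Finset.sum_le_sum
      intro K _
      rw [Finset.sum_mul]
      apply Finset.sum_le_sum
      intro L _
      rw [mul_assoc]
      exact mul_le_mul_of_nonneg_left (hyoung K L) (hP L K)
    have swap : ∑ K, ∑ L ∈ univ.erase K, P L K * x L ^ q
        = ∑ K, ∑ L ∈ univ.erase K, P K L * x K ^ q :=
      sum_erase_swap (fun K L => P L K * x L ^ q)
    have expand : ∑ K, ∑ L ∈ univ.erase K, P L K * ((1 - 1/q) * x K ^ q + (1/q) * x L ^ q)
        = (1 - 1/q) * Tin + (1/q) * T1 := by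
      have e1 : ∀ K : ι, ∑ L ∈ univ.erase K, P L K * ((1 - 1/q) * x K ^ q + (1/q) * x L ^ q)
          = (1 - 1/q) * ((∑ L ∈ univ.erase K, P L K) * x K ^ q)
            + (1/q) * (∑ L ∈ univ.erase K, P L K * x L ^ q) := by
        intro K
        rw [Finset.sum_mul, Finset.mul_sum, Finset.mul_sum, ← Finset.sum_add_distrib]
        exact Finset.sum_congr rfl fun L _ => by ring
      calc ∑ K, ∑ L ∈ univ.erase K, P L K * ((1 - 1/q) * x K ^ q + (1/q) * x L ^ q)
          = ∑ K, ((1 - 1/q) * ((∑ L ∈ univ.erase K, P L K) * x K ^ q)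
            + (1/q) * (∑ L ∈ univ.erase K, P L K * x L ^ q)) :=
            Finset.sum_congr rfl fun K _ => e1 K
        _ = (1 - 1/q) * (∑ K, (∑ L ∈ univ.erase K, P L K) * x K ^ q)
            + (1/q) * (∑ K, ∑ L ∈ univ.erase K, P L K * x L ^ q) := by
            rw [Finset.sum_add_distrib, Finset.mul_sum, Finset.mul_sum]
        _ = (1 - 1/q) * Tin + (1/q) * T1 := by
            rw [swap, hTindef, hT1def]
            congr 2
            exact Finset.sum_congr rfl fun K _ => (Finset.sum_mul _ _ _).symm
    exact expand ▸ step1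
  -- divergence bound
  have hTinT1 : Tin - T1 ≤ lam * S := by
    rw [hTindef, hT1def, hSdef, ← Finset.sum_sub_distrib, Finset.mul_sum]
    apply Finset.sum_le_sum
    intro K _
    rw [← sub_mul]
    calc ((∑ L ∈ univ.erase K, P L K) - ∑ L ∈ univ.erase K, P K L) * x K ^ q
        ≤ (lam * vol K) * x K ^ q :=
          mul_le_mul_of_nonneg_right (hdiv K) (Real.rpow_nonneg (hx K) q)
      _ = lam * (vol K * x K ^ q) := by ring
  -- main inequality so far
  have hmain : S ≤ R + (1 - 1/q) * lam * S := by
    have h1 : R = S + T1 - T2 := hident.symm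
    have h2 : S + T1 - T2 ≥ S - (1 - 1/q) * (Tin - T1) := by
      have : T2 ≤ (1 - 1/q) * Tin + (1/q) * T1 := hT2le
      nlinarith [this]
    nlinarith [mul_le_mul_of_nonneg_left hTinT1 hc]
  -- Hölder
  have hHolder : R ≤ S ^ (1 - 1/q) * (∑ K, vol K * (y K + δ * g K) ^ q) ^ (1/q) := by
    set F : ι → ℝ := fun K => vol K ^ (1/p) * x K ^ (q-1) with hF
    set Gf : ι → ℝ := fun K => vol K ^ (1/q) * (y K + δ * g K) with hGf
    have hFnn : ∀ K ∈ (univ : Finset ι), 0 ≤ F K := fun K _ =>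
      mul_nonneg (Real.rpow_nonneg (hvol K).le _) (Real.rpow_nonneg (hx K) _)
    have hGnn : ∀ K ∈ (univ : Finset ι), 0 ≤ Gf K := fun K _ =>
      mul_nonneg (Real.rpow_nonneg (hvol K).le _)
        (add_nonneg (hy K) (mul_nonneg hδ.le (hg K)))
    have hFG : ∀ K, F K * Gf K = vol K * (y K + δ * g K) * x K ^ (q-1) := by
      intro K
      have : vol K ^ (1/p) * vol K ^ (1/q) = vol K := by
        rw [← Real.rpow_add (hvol K), hp1]
        norm_num
      calc F K * Gf K = (vol K ^ (1/p) * vol K ^ (1/q)) * (y K + δ * g K) * x K ^ (q-1) := by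
            rw [hF, hGf]; ring
        _ = vol K * (y K + δ * g K) * x K ^ (q-1) := by rw [this]
    have hFp : ∀ K, F K ^ p = vol K * x K ^ q := by
      intro K
      rw [hF]
      rw [Real.mul_rpow (Real.rpow_nonneg (hvol K).le _) (Real.rpow_nonneg (hx K) _)]
      rw [← Real.rpow_mul (hvol K).le, ← Real.rpow_mul (hx K)]
      congr 1
      · rw [one_div_mul_cancel hpq.ne_zero, Real.rpow_one]
      · congr 1
        rw [hp]; field_simp
    have hGq : ∀ K, Gf K ^ q = vol K * (y K + δ * g K) ^ q := by
      intro K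
      rw [hGf]
      rw [Real.mul_rpow (Real.rpow_nonneg (hvol K).le _)
        (add_nonneg (hy K) (mul_nonneg hδ.le (hg K)))]
      rw [← Real.rpow_mul (hvol K).le]
      congr 2
      rw [one_div_mul_cancel hq0']
      exact (Real.rpow_one _)
    have h := Real.inner_le_Lp_mul_Lq_of_nonneg (univ : Finset ι) hpq hFnn hGnn
    rw [hRdef]
    calc ∑ K, vol K * (y K + δ * g K) * x K ^ (q-1) = ∑ K, F K * Gf K := by
          exact (Finset.sum_congr rfl fun K _ => (hFG K).symm)
      _ ≤ (∑ K, F K ^ p) ^ (1/p) * (∑ K, Gf K ^ q) ^ (1/q) := h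
      _ = S ^ (1 - 1/q) * (∑ K, vol K * (y K + δ * g K) ^ q) ^ (1/q) := by
          rw [hp1]
          congr 2
          · rw [hSdef]; exact Finset.sum_congr rfl fun K _ => hFp K
          · exact Finset.sum_congr rfl fun K _ => hGq K
  -- Minkowski
  have hMink : (∑ K, vol K * (y K + δ * g K) ^ q) ^ (1/q) ≤ Y ^ (1/q) + δ * G ^ (1/q) := by
    set F : ι → ℝ := fun K => vol K ^ (1/q) * y K with hF
    set Gf : ι → ℝ := fun K => vol K ^ (1/q) * (δ * g K) with hGf
    have hFnn : ∀ K ∈ (univ : Finset ι), 0 ≤ F K := fun K _ =>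
      mul_nonneg (Real.rpow_nonneg (hvol K).le _) (hy K)
    have hGnn : ∀ K ∈ (univ : Finset ι), 0 ≤ Gf K := fun K _ =>
      mul_nonneg (Real.rpow_nonneg (hvol K).le _) (mul_nonneg hδ.le (hg K))
    have key1 : ∀ K, vol K * (y K + δ * g K) ^ q = (F K + Gf K) ^ q := by
      intro K
      have h1 : F K + Gf K = vol K ^ (1/q) * (y K + δ * g K) := by rw [hF, hGf]; ring
      rw [h1, Real.mul_rpow (Real.rpow_nonneg (hvol K).le _)
        (add_nonneg (hy K) (mul_nonneg hδ.le (hg K))), ← Real.rpow_mul (hvol K).le,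
        one_div_mul_cancel hq0', Real.rpow_one]
    have h := Real.Lp_add_le_of_nonneg (s := (univ : Finset ι)) (f := F) (g := Gf) hq.le hFnn hGnn
    have e1 : ∑ K, (F K + Gf K) ^ q = ∑ K, vol K * (y K + δ * g K) ^ q :=
      Finset.sum_congr rfl fun K _ => (key1 K).symm
    have e2 : ∑ K, F K ^ q = Y := by
      rw [hYdef]
      refine Finset.sum_congr rfl fun K _ => ?_
      rw [hF, Real.mul_rpow (Real.rpow_nonneg (hvol K).le _) (hy K),
        ← Real.rpow_mul (hvol K).le, one_div_mul_cancel hq0', Real.rpow_one]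
    have e3 : (∑ K, Gf K ^ q) ^ (1/q) = δ * G ^ (1/q) := by
      have : ∑ K, Gf K ^ q = δ ^ q * G := by
        rw [hGdef, Finset.mul_sum]
        refine Finset.sum_congr rfl fun K _ => ?_
        rw [hGf, Real.mul_rpow (Real.rpow_nonneg (hvol K).le _) (mul_nonneg hδ.le (hg K)),
          ← Real.rpow_mul (hvol K).le, one_div_mul_cancel hq0', Real.rpow_one,
          Real.mul_rpow hδ.le (hg K)]
        ring
      rw [this, Real.mul_rpow (Real.rpow_nonneg hδ.le _)
        (Finset.sum_nonneg fun K _ => mul_nonneg (hvol K).le (Real.rpow_nonneg (hg K) _)),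
        ← Real.rpow_mul hδ.le, mul_one_div_cancel hq0', Real.rpow_one]
    rw [e1] at h
    rw [e2, e3] at h
    exact h
  -- put together
  set M : ℝ := Y ^ (1/q) + δ * G ^ (1/q) with hM
  have hM0 : 0 ≤ M := by
    have : (0:ℝ) ≤ Y ^ (1/q) := Real.rpow_nonneg (Finset.sum_nonneg fun K _ =>
      mul_nonneg (hvol K).le (Real.rpow_nonneg (hy K) _)) _
    have : (0:ℝ) ≤ G ^ (1/q) := Real.rpow_nonneg (Finset.sum_nonneg fun K _ =>
      mul_nonneg (hvol K).le (Real.rpow_nonneg (hg K) _)) _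
    positivity
  set t : ℝ := (1 - 1/q) * lam with htdef
  have ht0 : 0 ≤ t := mul_nonneg hc hlam0
  have hfinal : S ≤ S ^ (1 - 1/q) * M + t * S := by
    have h1 : R ≤ S ^ (1 - 1/q) * M := by
      calc R ≤ S ^ (1 - 1/q) * (∑ K, vol K * (y K + δ * g K) ^ q) ^ (1/q) := hHolder
        _ ≤ S ^ (1 - 1/q) * M := mul_le_mul_of_nonneg_left hMink (Real.rpow_nonneg hS0 _)
    calc S ≤ R + (1 - 1/q) * lam * S := hmain
      _ ≤ S ^ (1 - 1/q) * M + t * S := by rw [htdef]; linarith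
  rcases eq_or_lt_of_le hS0 with hS | hS
  · rw [← hS, Real.zero_rpow (by positivity : (1:ℝ)/q ≠ 0)]
    positivity
  · -- S > 0
    have hA : (0:ℝ) < S ^ (1/q) := Real.rpow_pos_of_pos hS _
    have hsplit : S = S ^ (1 - 1/q) * S ^ (1/q) := by
      rw [← Real.rpow_add hS]
      norm_num
    have hSc : (0:ℝ) < S ^ (1 - 1/q) := Real.rpow_pos_of_pos hS _
    have hstep2 : (1 - t) * S ^ (1/q) ≤ M := by
      have h2 : S ^ (1 - 1/q) * ((1 - t) * S ^ (1/q)) ≤ S ^ (1 - 1/q) * M := by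
        have e : S ^ (1 - 1/q) * ((1 - t) * S ^ (1/q)) = S - t * S := by
          linear_combination (t - 1) * hsplit
        rw [e]
        linarith [hfinal]
      exact le_of_mul_le_mul_left h2 hSc
    have hone : 1 ≤ (1 - t) * Real.exp (κ * t) := one_le_one_sub_mul_exp hκ ht0 hCFL
    calc S ^ (1/q) = S ^ (1/q) * 1 := (mul_one _).symm
      _ ≤ S ^ (1/q) * ((1 - t) * Real.exp (κ * t)) := mul_le_mul_of_nonneg_left hone hA.le
      _ = ((1 - t) * S ^ (1/q)) * Real.exp (κ * t) := by ring
      _ ≤ M * Real.exp (κ * t) := mul_le_mul_of_nonneg_right hstep2 (Real.exp_pos _).le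
      _ = Real.exp (κ * ((1 - 1/q) * lam)) * M := by rw [htdef]; ring

lemma aux_pos {ι : Type*} [Fintype ι] [DecidableEq ι]
    (vol : ι → ℝ) (hvol : ∀ K, 0 < vol K)
    (C : ι → ι → ℝ) (hC : ∀ K L, 0 ≤ C K L)
    (x r : ι → ℝ) (hr : ∀ K, 0 ≤ r K)
    (heq : ∀ K, vol K * x K + (∑ L ∈ univ.erase K, C K L) * x K
        - ∑ L ∈ univ.erase K, C L K * x L = r K) :
    ∀ K, 0 ≤ x K := by
  by_contra hcon
  push_neg at hcon
  obtain ⟨K₀, hK₀⟩ := hcon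
  set S : Finset ι := univ.filter (fun K => x K < 0) with hS
  have hK₀S : K₀ ∈ S := by simp [hS, hK₀]
  have hmem : ∀ K, K ∈ S ↔ x K < 0 := by intro K; simp [hS]
  -- sum of equations over S
  have hsum : ∑ K ∈ S, (vol K * x K + (∑ L ∈ univ.erase K, C K L) * x K
      - ∑ L ∈ univ.erase K, C L K * x L) = ∑ K ∈ S, r K :=
    Finset.sum_congr rfl fun K _ => heq K
  have hrS : 0 ≤ ∑ K ∈ S, r K := Finset.sum_nonneg fun K _ => hr K
  -- rewrite the double sum
  have hdouble : ∑ K ∈ S, ∑ L ∈ univ.erase K, C L K * x L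
      = ∑ L, (∑ K ∈ S.erase L, C L K) * x L := by
    have h1 : ∀ K, ∑ L ∈ univ.erase K, C L K * x L
        = ∑ L, if L = K then 0 else C L K * x L := fun K => sum_erase_eq_sum_ite K _
    calc ∑ K ∈ S, ∑ L ∈ univ.erase K, C L K * x L
        = ∑ K ∈ S, ∑ L, if L = K then 0 else C L K * x L :=
          Finset.sum_congr rfl fun K _ => h1 K
      _ = ∑ L, ∑ K ∈ S, if L = K then 0 else C L K * x L := Finset.sum_comm
      _ = ∑ L, (∑ K ∈ S.erase L, C L K) * x L := by
          refine Finset.sum_congr rfl fun L _ => ?_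
          rw [Finset.sum_mul]
          rw [← Finset.sum_erase S (by simp : (if L = L then (0:ℝ) else C L L * x L) = 0)]
          refine Finset.sum_congr rfl fun K hK => ?_
          rw [if_neg (Ne.symm (Finset.mem_erase.1 hK).1)]
  -- bound each L-term
  have hbound : ∑ L, (∑ K ∈ S.erase L, C L K) * x L
      ≥ ∑ L ∈ S, (∑ K ∈ univ.erase L, C L K) * x L := by
    rw [← Finset.sum_filter_add_sum_filter_not univ (fun L => L ∈ S)
      (fun L => (∑ K ∈ S.erase L, C L K) * x L)]
    have hfS : univ.filter (fun L => L ∈ S) = S := by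
      ext L; simp [hS]
    rw [hfS]
    have h2 : ∀ L ∈ univ.filter (fun L => L ∉ S), (0:ℝ) ≤ (∑ K ∈ S.erase L, C L K) * x L := by
      intro L hL
      simp only [Finset.mem_filter, hmem, not_lt] at hL
      exact mul_nonneg (Finset.sum_nonneg fun K _ => hC L K) hL.2
    have h3 : ∀ L ∈ S, (∑ K ∈ univ.erase L, C L K) * x L ≤ (∑ K ∈ S.erase L, C L K) * x L := by
      intro L hL
      have hxL : x L < 0 := (hmem L).1 hL
      have hsub : ∑ K ∈ S.erase L, C L K ≤ ∑ K ∈ univ.erase L, C L K :=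
        Finset.sum_le_sum_of_subset_of_nonneg
          (Finset.erase_subset_erase L (Finset.subset_univ S))
          (fun K _ _ => hC L K)
      exact mul_le_mul_of_nonpos_right hsub hxL.le
    have := Finset.sum_le_sum h3
    have := Finset.sum_nonneg h2
    linarith
  -- conclude
  have hneg : ∑ K ∈ S, vol K * x K < 0 := by
    apply Finset.sum_neg (fun K hK => mul_neg_of_pos_of_neg (hvol K) ((hmem K).1 hK)) ⟨K₀, hK₀S⟩
  rw [Finset.sum_sub_distrib, Finset.sum_add_distrib, hdouble] at hsum
  have : ∑ K ∈ S, vol K * x K ≥ ∑ K ∈ S, r K := by linarith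
  linarith

/-- **Iterated discrete `L^q` stability of the implicit upwind scheme.**
With `N` time steps, `q ∈ (1,∞)`, `κ > 1`, nonnegative data, time step `δ > 0`,
`λⁿ := δ · max_K ((div uⁿ)_K)⁻` and `Λ := exp(∑ₙ λⁿ)`, if `((q−1)/q) λⁿ ≤ (κ−1)/κ`
for every `n < N`, then
`max_{0 ≤ n ≤ N} ‖ρⁿ‖_{ℓ^q} ≤ Λ^{κ(1−1/q)} (‖ρ⁰‖_{ℓ^q} + ∑ₙ δ‖fⁿ‖_{ℓ^q})`. -/
theorem upwind_iterated_Lq_stability {ι : Type*} [Fintype ι] [Nonempty ι] [DecidableEq ι]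
    (vol : ι → ℝ) (hvol : ∀ K, 0 < vol K)
    (edge : ι → ι → ℝ) (hedge_symm : ∀ K L, edge K L = edge L K)
    (hedge_nonneg : ∀ K L, 0 ≤ edge K L)
    (u : ℕ → ι → ι → ℝ) (hu_antisymm : ∀ n K L, u n K L = - u n L K)
    (hu_edge : ∀ n K L, edge K L = 0 → u n K L = 0)
    (q κ : ℝ) (hq : 1 < q) (hκ : 1 < κ)
    (δ : ℝ) (hδ : 0 < δ) (N : ℕ) (ρ f : ℕ → ι → ℝ)
    (hρ0 : ∀ K, 0 ≤ ρ 0 K) (hf : ∀ n K, 0 ≤ f n K)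
    (hstep : ∀ n < N, ∀ K : ι,
      (ρ (n+1) K - ρ n K) / δ +
        ∑ L ∈ univ.erase K, edge K L / vol K *
          (max (u n K L) 0 * ρ (n+1) K - max (-u n K L) 0 * ρ (n+1) L) = f n K)
    (lam : ℕ → ℝ)
    (hlam : ∀ n, lam n = δ * univ.sup' univ_nonempty
      (fun K => max (-((∑ L ∈ univ.erase K, edge K L * u n K L) / vol K)) 0))
    (hCFL : ∀ n < N, (q - 1)/q * lam n ≤ (κ - 1)/κ) :
    ∀ n ≤ N, (∑ K, vol K * |ρ n K| ^ q) ^ (1/q) ≤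
      (Real.exp (∑ m ∈ Finset.range N, lam m)) ^ (κ * (1 - 1/q)) *
        ((∑ K, vol K * |ρ 0 K| ^ q) ^ (1/q) +
          ∑ m ∈ Finset.range N, δ * (∑ K, vol K * |f m K| ^ q) ^ (1/q)) := by
  have hq0 : (0:ℝ) < q := by linarith
  have hq0' : q ≠ 0 := hq0.ne'
  have hc : 0 ≤ 1 - 1/q := by
    have : 1/q < 1 := by rw [div_lt_one hq0]; exact hq
    linarith
  -- flux coefficients
  set P : ℕ → ι → ι → ℝ := fun n K L => δ * (edge K L * max (u n K L) 0) with hPdef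
  have hPnn : ∀ n K L, 0 ≤ P n K L := fun n K L =>
    mul_nonneg hδ.le (mul_nonneg (hedge_nonneg K L) (le_max_right _ _))
  have hmaxswap : ∀ n K L, edge K L * max (-u n K L) 0 = edge L K * max (u n L K) 0 := by
    intro n K L
    rw [hedge_symm K L, hu_antisymm n K L, neg_neg]
  have hPswap : ∀ n K L, P n L K = δ * (edge K L * max (-u n K L) 0) := by
    intro n K L
    rw [hPdef]
    simp only []
    rw [hmaxswap n K L]
  -- lam nonneg
  have hlamnn : ∀ n, 0 ≤ lam n := by
    intro n
    rw [hlam n]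
    apply mul_nonneg hδ.le
    obtain ⟨K⟩ := (inferInstance : Nonempty ι)
    exact le_trans (le_max_right _ 0)
      (Finset.le_sup' (fun K => max (-((∑ L ∈ univ.erase K, edge K L * u n K L) / vol K)) 0)
        (mem_univ K))
  -- key rearranged scheme
  have key : ∀ n, n < N → ∀ K, vol K * ρ (n+1) K
      + (∑ L ∈ univ.erase K, P n K L) * ρ (n+1) K
      - ∑ L ∈ univ.erase K, P n L K * ρ (n+1) L
      = vol K * (ρ n K + δ * f n K) := by
    intro n hn K
    have h := hstep n hn K
    have hv : vol K ≠ 0 := (hvol K).ne'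
    have hsum : (∑ L ∈ univ.erase K, P n K L) * ρ (n+1) K
        - ∑ L ∈ univ.erase K, P n L K * ρ (n+1) L
        = δ * vol K * ∑ L ∈ univ.erase K, edge K L / vol K *
            (max (u n K L) 0 * ρ (n+1) K - max (-u n K L) 0 * ρ (n+1) L) := by
      rw [Finset.mul_sum, Finset.sum_mul, ← Finset.sum_sub_distrib]
      refine Finset.sum_congr rfl fun L _ => ?_
      rw [hPswap n K L, hPdef]
      simp only []
      field_simp
    have h2 : δ * vol K * ((ρ (n+1) K - ρ n K) / δ
        + ∑ L ∈ univ.erase K, edge K L / vol K *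
            (max (u n K L) 0 * ρ (n+1) K - max (-u n K L) 0 * ρ (n+1) L))
        = δ * vol K * f n K := by rw [h]
    rw [mul_add] at h2
    have h3 : δ * vol K * ((ρ (n+1) K - ρ n K) / δ) = vol K * (ρ (n+1) K - ρ n K) := by
      field_simp
    rw [h3, ← hsum] at h2
    linarith [h2]
  -- positivity
  have hpos : ∀ n, n ≤ N → ∀ K, 0 ≤ ρ n K := by
    intro n
    induction n with
    | zero => exact fun _ => hρ0
    | succ m ih =>
      intro hm
      have hmN : m < N := Nat.lt_of_succ_le hm
      exact aux_pos vol hvol (P m) (hPnn m) (ρ (m+1))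
        (fun K => vol K * (ρ m K + δ * f m K))
        (fun K => mul_nonneg (hvol K).le
          (add_nonneg (ih (le_of_lt hmN) K) (mul_nonneg hδ.le (hf m K))))
        (key m hmN)
  -- divergence bound
  have hdiv : ∀ n, n < N → ∀ K,
      (∑ L ∈ univ.erase K, P n L K) - (∑ L ∈ univ.erase K, P n K L) ≤ lam n * vol K := by
    intro n _ K
    have hv : vol K ≠ 0 := (hvol K).ne'
    have e1 : (∑ L ∈ univ.erase K, P n L K) - (∑ L ∈ univ.erase K, P n K L)
        = -(δ * ∑ L ∈ univ.erase K, edge K L * u n K L) := by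
      rw [← Finset.sum_sub_distrib, Finset.mul_sum, ← Finset.sum_neg_distrib]
      refine Finset.sum_congr rfl fun L _ => ?_
      rw [hPswap n K L]
      have m := max_zero_sub_max_neg_zero_eq_self (u n K L)
      simp only [hPdef]
      linear_combination (-(δ * edge K L)) * m
    set E : ℝ := ∑ L ∈ univ.erase K, edge K L * u n K L with hE
    rw [e1]
    have h1 : max (-(E / vol K)) 0 ≤ univ.sup' univ_nonempty
        (fun K => max (-((∑ L ∈ univ.erase K, edge K L * u n K L) / vol K)) 0) :=
      Finset.le_sup' (fun K => max (-((∑ L ∈ univ.erase K, edge K L * u n K L) / vol K)) 0)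
        (mem_univ K)
    have h2 : -(E / vol K) ≤ max (-(E / vol K)) 0 := le_max_left _ _
    have h3 : -(E / vol K) * vol K = -E := by
      rw [neg_mul, div_mul_cancel₀ _ hv]
    calc -(δ * E) = δ * (-(E / vol K) * vol K) := by rw [h3]; ring
      _ ≤ δ * (max (-(E / vol K)) 0 * vol K) := by
          apply mul_le_mul_of_nonneg_left _ hδ.le
          exact mul_le_mul_of_nonneg_right h2 (hvol K).le
      _ ≤ δ * (univ.sup' univ_nonempty
          (fun K => max (-((∑ L ∈ univ.erase K, edge K L * u n K L) / vol K)) 0) * vol K) := by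
          apply mul_le_mul_of_nonneg_left _ hδ.le
          exact mul_le_mul_of_nonneg_right h1 (hvol K).le
      _ = lam n * vol K := by rw [hlam n]; ring
  -- CFL in the (1 - 1/q) form
  have hCFL' : ∀ n < N, (1 - 1/q) * lam n ≤ (κ - 1)/κ := by
    intro n hn
    have : (q - 1)/q = 1 - 1/q := by rw [sub_div, div_self hq0']
    rw [← this]
    exact hCFL n hn
  -- per-step estimate
  have hstepest : ∀ n, n < N →
      (∑ K, vol K * (ρ (n+1) K) ^ q) ^ (1/q) ≤
        Real.exp (κ * ((1 - 1/q) * lam n)) *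
          ((∑ K, vol K * (ρ n K) ^ q) ^ (1/q) + δ * (∑ K, vol K * (f n K) ^ q) ^ (1/q)) := by
    intro n hn
    exact aux_step vol hvol (P n) (hPnn n) q κ (lam n) δ hq hκ hδ (hlamnn n) (hCFL' n hn)
      (ρ (n+1)) (ρ n) (f n)
      (hpos (n+1) (Nat.succ_le_of_lt hn))
      (hpos n (le_of_lt hn)) (hf n) (key n hn) (hdiv n hn)
  -- iterate
  have iter : ∀ n, n ≤ N →
      (∑ K, vol K * (ρ n K) ^ q) ^ (1/q) ≤
        Real.exp (κ * (1 - 1/q) * ∑ m ∈ Finset.range n, lam m) *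
          ((∑ K, vol K * (ρ 0 K) ^ q) ^ (1/q) +
            ∑ m ∈ Finset.range n, δ * (∑ K, vol K * (f m K) ^ q) ^ (1/q)) := by
    intro n
    induction n with
    | zero => intro _; simp
    | succ m ih =>
      intro hm
      have hmN : m < N := Nat.lt_of_succ_le hm
      have ihm := ih (le_of_lt hmN)
      have hexp1 : (0:ℝ) ≤ Real.exp (κ * ((1 - 1/q) * lam m)) := (Real.exp_pos _).le
      have hE1 : 1 ≤ Real.exp (κ * (1 - 1/q) * ∑ m' ∈ Finset.range m, lam m') := by
        rw [Real.one_le_exp_iff]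
        have : (0:ℝ) ≤ ∑ m' ∈ Finset.range m, lam m' :=
          Finset.sum_nonneg fun m' _ => hlamnn m'
        have hκ0 : (0:ℝ) ≤ κ := by linarith
        positivity
      have hFm : (0:ℝ) ≤ δ * (∑ K, vol K * (f m K) ^ q) ^ (1/q) := by
        apply mul_nonneg hδ.le
        apply Real.rpow_nonneg
        exact Finset.sum_nonneg fun K _ => mul_nonneg (hvol K).le (Real.rpow_nonneg (hf m K) _)
      calc (∑ K, vol K * (ρ (m+1) K) ^ q) ^ (1/q)
          ≤ Real.exp (κ * ((1 - 1/q) * lam m)) *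
            ((∑ K, vol K * (ρ m K) ^ q) ^ (1/q) + δ * (∑ K, vol K * (f m K) ^ q) ^ (1/q)) :=
            hstepest m hmN
        _ ≤ Real.exp (κ * ((1 - 1/q) * lam m)) *
            (Real.exp (κ * (1 - 1/q) * ∑ m' ∈ Finset.range m, lam m') *
              ((∑ K, vol K * (ρ 0 K) ^ q) ^ (1/q) +
                ∑ m' ∈ Finset.range m, δ * (∑ K, vol K * (f m' K) ^ q) ^ (1/q))
              + δ * (∑ K, vol K * (f m K) ^ q) ^ (1/q)) := by
            apply mul_le_mul_of_nonneg_left _ hexp1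
            exact add_le_add_left ihm _
        _ ≤ Real.exp (κ * ((1 - 1/q) * lam m)) *
            (Real.exp (κ * (1 - 1/q) * ∑ m' ∈ Finset.range m, lam m') *
              ((∑ K, vol K * (ρ 0 K) ^ q) ^ (1/q) +
                ∑ m' ∈ Finset.range m, δ * (∑ K, vol K * (f m' K) ^ q) ^ (1/q))
              + Real.exp (κ * (1 - 1/q) * ∑ m' ∈ Finset.range m, lam m') *
                (δ * (∑ K, vol K * (f m K) ^ q) ^ (1/q))) := by
            apply mul_le_mul_of_nonneg_left _ hexp1
            apply add_le_add_right
            exact le_mul_of_one_le_left hFm hE1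
        _ = Real.exp (κ * (1 - 1/q) * ∑ m' ∈ Finset.range (m+1), lam m') *
            ((∑ K, vol K * (ρ 0 K) ^ q) ^ (1/q) +
              ∑ m' ∈ Finset.range (m+1), δ * (∑ K, vol K * (f m' K) ^ q) ^ (1/q)) := by
            rw [Finset.sum_range_succ (fun m' => lam m'),
              Finset.sum_range_succ (fun m' => δ * (∑ K, vol K * (f m' K) ^ q) ^ (1/q))]
            rw [show κ * (1 - 1/q) * ((∑ m' ∈ Finset.range m, lam m') + lam m)
              = κ * ((1 - 1/q) * lam m) + κ * (1 - 1/q) * ∑ m' ∈ Finset.range m, lam m'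
              from by ring]
            rw [Real.exp_add]
            ring
  -- final assembly
  intro n hn
  have habsρ : ∀ k, (∀ K, 0 ≤ ρ k K) →
      (∑ K, vol K * |ρ k K| ^ q) = ∑ K, vol K * (ρ k K) ^ q := fun k h =>
    Finset.sum_congr rfl fun K _ => by rw [abs_of_nonneg (h K)]
  have habsf : ∑ m ∈ Finset.range N, δ * (∑ K, vol K * |f m K| ^ q) ^ (1/q)
      = ∑ m ∈ Finset.range N, δ * (∑ K, vol K * (f m K) ^ q) ^ (1/q) :=
    Finset.sum_congr rfl fun m _ => by
      congr 2
      exact Finset.sum_congr rfl fun K _ => by rw [abs_of_nonneg (hf m K)]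
  rw [habsρ n (hpos n hn), habsρ 0 hρ0, habsf]
  have hexpfin : (Real.exp (∑ m ∈ Finset.range N, lam m)) ^ (κ * (1 - 1/q))
      = Real.exp (κ * (1 - 1/q) * ∑ m ∈ Finset.range N, lam m) := by
    rw [← Real.exp_mul, mul_comm]
  rw [hexpfin]
  have hA0 : (0:ℝ) ≤ (∑ K, vol K * (ρ 0 K) ^ q) ^ (1/q) :=
    Real.rpow_nonneg (Finset.sum_nonneg fun K _ =>
      mul_nonneg (hvol K).le (Real.rpow_nonneg (hρ0 K) _)) _
  have hFnn : ∀ m, (0:ℝ) ≤ δ * (∑ K, vol K * (f m K) ^ q) ^ (1/q) := fun m =>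
    mul_nonneg hδ.le (Real.rpow_nonneg (Finset.sum_nonneg fun K _ =>
      mul_nonneg (hvol K).le (Real.rpow_nonneg (hf m K) _)) _)
  have hmono1 : Real.exp (κ * (1 - 1/q) * ∑ m ∈ Finset.range n, lam m)
      ≤ Real.exp (κ * (1 - 1/q) * ∑ m ∈ Finset.range N, lam m) := by
    apply Real.exp_le_exp.2
    apply mul_le_mul_of_nonneg_left _ (by positivity : (0:ℝ) ≤ κ * (1 - 1/q))
    exact Finset.sum_le_sum_of_subset_of_nonneg
      (Finset.range_subset_range.2 hn) (fun m _ _ => hlamnn m)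
  have hmono2 : ∑ m ∈ Finset.range n, δ * (∑ K, vol K * (f m K) ^ q) ^ (1/q)
      ≤ ∑ m ∈ Finset.range N, δ * (∑ K, vol K * (f m K) ^ q) ^ (1/q) :=
    Finset.sum_le_sum_of_subset_of_nonneg (Finset.range_subset_range.2 hn)
      (fun m _ _ => hFnn m)
  calc (∑ K, vol K * (ρ n K) ^ q) ^ (1/q)
      ≤ Real.exp (κ * (1 - 1/q) * ∑ m ∈ Finset.range n, lam m) *
        ((∑ K, vol K * (ρ 0 K) ^ q) ^ (1/q) +
          ∑ m ∈ Finset.range n, δ * (∑ K, vol K * (f m K) ^ q) ^ (1/q)) := iter n hn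
    _ ≤ Real.exp (κ * (1 - 1/q) * ∑ m ∈ Finset.range N, lam m) *
        ((∑ K, vol K * (ρ 0 K) ^ q) ^ (1/q) +
          ∑ m ∈ Finset.range N, δ * (∑ K, vol K * (f m K) ^ q) ^ (1/q)) := by
        apply mul_le_mul hmono1 (add_le_add_right hmono2 _) _ (Real.exp_pos _).le
        have : (0:ℝ) ≤ ∑ m ∈ Finset.range n, δ * (∑ K, vol K * (f m K) ^ q) ^ (1/q) :=
          Finset.sum_nonneg fun m _ => hFnn m
        linarith
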